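/- Let S_n be the star graph on n ≥ 2 vertices v_1,...,v_n with center v_1 (edges {v_1,v_i} for i = 2,...,n). Then the Laplacian energies of its vertices are LE_{S_n}(v_1) = (n−1)(n² − 2n + 4)/n², and LE_{S_n}(v_k) = (n³ − n² − 2n + 4)/(n²(n−1)) for every k ≥ 2. -/

import Mathlib

open Matrix BigOperators Finset

/-- The square root of a positive semidefinite matrix, as `PosSemidef.sqrt` was defined in the
older Mathlib. -/
noncomputable def posSemidefSqrt {n : ℕ} {A : Matrix (Fin n) (Fin n) ℝ} (hA : A.PosSemidef) :
    Matrix (Fin n) (Fin n) ℝ :=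
  hA.1.eigenvectorUnitary.1 * diagonal ((↑) ∘ Real.sqrt ∘ hA.1.eigenvalues) *
    (star hA.1.eigenvectorUnitary : Matrix (Fin n) (Fin n) ℝ)

/-- The absolute value of a real matrix `B`, defined as `(B * Bᵀ)^(1/2)`. -/
noncomputable def matAbs {n : ℕ} (B : Matrix (Fin n) (Fin n) ℝ) : Matrix (Fin n) (Fin n) ℝ :=
  posSemidefSqrt (Matrix.conjTranspose_eq_transpose_of_trivial B ▸
    Matrix.posSemidef_self_mul_conjTranspose B : (B * Bᵀ).PosSemidef)

/-- The (adjacency) energy of the vertex `i` of the graph `G`: `|A|_{ii}`. -/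
noncomputable def vertexEnergy {n : ℕ} (G : SimpleGraph (Fin n)) [DecidableRel G.Adj]
    (i : Fin n) : ℝ :=
  matAbs (G.adjMatrix ℝ) i i

/-- The Laplacian energy of the vertex `i` of the graph `G`: `(|L - (2m/n) I|)_{ii}`. -/
noncomputable def vertexLapEnergy {n : ℕ} (G : SimpleGraph (Fin n)) [DecidableRel G.Adj]
    (i : Fin n) : ℝ :=
  matAbs (G.lapMatrix ℝ - ((2 * (G.edgeFinset.card : ℝ)) / n) • 1) i i

/-- The normalized Laplacian `𝓛 = I - D^{-1/2} A D^{-1/2}` of the graph `G`. -/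
noncomputable def normLap {n : ℕ} (G : SimpleGraph (Fin n)) [DecidableRel G.Adj] :
    Matrix (Fin n) (Fin n) ℝ :=
  1 - Matrix.diagonal (fun i => (Real.sqrt (G.degree i))⁻¹) * G.adjMatrix ℝ *
      Matrix.diagonal (fun i => (Real.sqrt (G.degree i))⁻¹)

/-- The normalized Laplacian energy of the vertex `i` of the graph `G`: `(|𝓛 - I|)_{ii}`. -/
noncomputable def vertexNormLapEnergy {n : ℕ} (G : SimpleGraph (Fin n)) [DecidableRel G.Adj]
    (i : Fin n) : ℝ :=
  matAbs (normLap G - 1) i i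

/-- The star graph on `Fin n`: the vertex `0` is joined to every other vertex,
and there are no other edges. -/
def starGraph (n : ℕ) : SimpleGraph (Fin n) where
  Adj v w := v ≠ w ∧ (v.val = 0 ∨ w.val = 0)
  symm := ⟨fun _ _ ⟨h1, h2⟩ => ⟨h1.symm, h2.symm⟩⟩
  loopless := ⟨fun _ h => h.1 rfl⟩

instance (n : ℕ) : DecidableRel (starGraph n).Adj := fun v w =>
  inferInstanceAs (Decidable (v ≠ w ∧ (v.val = 0 ∨ w.val = 0)))

lemma vvm {n : ℕ} (a b c d : Fin n → ℝ) :
    vecMulVec a b * vecMulVec c d = (b ⬝ᵥ c) • vecMulVec a d := by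
  ext i j
  simp only [mul_apply, vecMulVec_apply, Matrix.smul_apply, dotProduct, smul_eq_mul]
  rw [Finset.sum_mul]
  exact Finset.sum_congr rfl fun k _ => by ring

lemma vvmv {n : ℕ} (a b x : Fin n → ℝ) :
    (vecMulVec a b) *ᵥ x = (b ⬝ᵥ x) • a := by
  ext i
  simp only [mulVec, dotProduct, vecMulVec_apply, Pi.smul_apply, smul_eq_mul]
  rw [Finset.sum_mul]
  exact Finset.sum_congr rfl fun k _ => by ring

lemma vvt {n : ℕ} (a b : Fin n → ℝ) : (vecMulVec a b)ᵀ = vecMulVec b a := by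
  ext i j; simp [vecMulVec_apply, mul_comm]

lemma zero_lt_of_two_le {n : ℕ} (hn : 2 ≤ n) : 0 < n := by omega

lemma split_sum {n : ℕ} (hn : 2 ≤ n) (f : Fin n → ℝ) (c : ℝ)
    (hf : ∀ i : Fin n, i.val ≠ 0 → f i = c) :
    ∑ i, f i = f ⟨0, zero_lt_of_two_le hn⟩ + ((n : ℝ) - 1) * c := by
  rw [← Finset.add_sum_erase _ _ (Finset.mem_univ (⟨0, by omega⟩ : Fin n))]
  congr 1
  rw [Finset.sum_congr rfl (fun x hx => hf x (fun h =>
      (Finset.mem_erase.mp hx).1 (Fin.ext h)))]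
  rw [Finset.sum_const, Finset.card_erase_of_mem (Finset.mem_univ _),
    Finset.card_univ, Fintype.card_fin, nsmul_eq_mul, Nat.cast_sub (by omega),
    Nat.cast_one]

lemma star_adj {n : ℕ} (v w : Fin n) :
    (starGraph n).Adj v w ↔ v ≠ w ∧ (v.val = 0 ∨ w.val = 0) := Iff.rfl

lemma deg0 {n : ℕ} (hn : 2 ≤ n) : (starGraph n).degree ⟨0, zero_lt_of_two_le hn⟩ = n - 1 := by
  have : (starGraph n).neighborFinset ⟨0, by omega⟩ = Finset.univ.erase ⟨0, by omega⟩ := by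
    ext w
    simp only [SimpleGraph.mem_neighborFinset, star_adj, Finset.mem_erase,
      Finset.mem_univ, and_true]
    constructor
    · rintro ⟨h1, _⟩; exact h1.symm
    · intro h; exact ⟨fun h' => h h'.symm, Or.inl trivial⟩
  rw [SimpleGraph.degree, this, Finset.card_erase_of_mem (Finset.mem_univ _),
    Finset.card_univ, Fintype.card_fin]

lemma degk {n : ℕ} (hn : 2 ≤ n) (k : Fin n) (hk : k.val ≠ 0) :
    (starGraph n).degree k = 1 := by
  have : (starGraph n).neighborFinset k = {⟨0, by omega⟩} := by
    ext w
    simp only [SimpleGraph.mem_neighborFinset, star_adj, Finset.mem_singleton]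
    constructor
    · rintro ⟨h1, h2 | h2⟩
      · exact absurd h2 hk
      · exact Fin.ext h2
    · rintro rfl
      exact ⟨fun h => hk (by rw [h]), Or.inr rfl⟩
  rw [SimpleGraph.degree, this, Finset.card_singleton]

lemma star_edges {n : ℕ} (hn : 2 ≤ n) : (starGraph n).edgeFinset.card = n - 1 := by
  have h := (starGraph n).sum_degrees_eq_twice_card_edges
  rw [← Finset.add_sum_erase _ _ (Finset.mem_univ (⟨0, by omega⟩ : Fin n))] at h
  rw [deg0 hn, Finset.sum_congr rfl (fun x hmem => degk hn x ?_)] at h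
  · rw [Finset.sum_const, smul_eq_mul, mul_one,
      Finset.card_erase_of_mem (Finset.mem_univ _)] at h
    simp only [Finset.card_univ, Fintype.card_fin] at h
    omega
  · intro hx
    exact (Finset.mem_erase.mp hmem).1 (Fin.ext hx : x = ⟨0, by omega⟩)

open scoped MatrixOrder in
lemma posSemidefSqrt_eq {n : ℕ} {A S : Matrix (Fin n) (Fin n) ℝ} (hA : A.PosSemidef)
    (hS : S.PosSemidef) (h : S ^ 2 = A) : posSemidefSqrt hA = S := by
  have e : posSemidefSqrt hA = cfc Real.sqrt A := by
    rw [hA.1.cfc_eq]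
    simp [Matrix.IsHermitian.cfc, posSemidefSqrt]
    rfl
  rw [e, ← cfcₙ_eq_cfc, ← CFC.sqrt_eq_real_sqrt A hA.nonneg,
    CFC.sqrt_eq_iff A S hA.nonneg hS.nonneg, ← sq, h]

theorem stmt19 (n : ℕ) (hn : 2 ≤ n) :
    vertexLapEnergy (starGraph n) ⟨0, by omega⟩ =
        ((n : ℝ) - 1) * ((n : ℝ) ^ 2 - 2 * (n : ℝ) + 4) / (n : ℝ) ^ 2 ∧
      ∀ k : Fin n, k.val ≠ 0 →
        vertexLapEnergy (starGraph n) k =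
          ((n : ℝ) ^ 3 - (n : ℝ) ^ 2 - 2 * (n : ℝ) + 4) / ((n : ℝ) ^ 2 * ((n : ℝ) - 1)) := by
  have h2 : (2 : ℝ) ≤ (n : ℝ) := by exact_mod_cast hn
  have hn0 : (n : ℝ) ≠ 0 := by linarith
  have hn1 : (n : ℝ) - 1 ≠ 0 := by linarith
  set z : Fin n := ⟨0, by omega⟩ with hz
  set v : Fin n → ℝ := fun _ => 1 with hv
  set w : Fin n → ℝ := fun i => if i.val = 0 then ((n : ℝ) - 1) else -1 with hw
  set J := vecMulVec v v with hJ
  set W := vecMulVec w w with hW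
  have wz : w z = (n : ℝ) - 1 := by simp [hw, hz]
  have wk : ∀ k : Fin n, k.val ≠ 0 → w k = -1 := fun k hk => by simp [hw, hk]
  have dvv : v ⬝ᵥ v = (n : ℝ) := by
    rw [dotProduct, split_sum hn _ 1 (fun i _ => by simp [hv])]
    simp [hv]
  have dvw : v ⬝ᵥ w = 0 := by
    rw [dotProduct, split_sum hn _ (-1) (fun i hi => by simp [hv, wk i hi])]
    rw [hv]; simp only [one_mul]
    rw [wz]; ring
  have dwv : w ⬝ᵥ v = 0 := by rw [dotProduct_comm]; exact dvw
  have dww : w ⬝ᵥ w = (n : ℝ) * ((n : ℝ) - 1) := by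
    rw [dotProduct, split_sum hn _ 1 (fun i hi => by rw [wk i hi]; ring)]
    rw [wz]; ring
  have d0 : (((starGraph n).degree z : ℕ) : ℝ) = (n : ℝ) - 1 := by
    rw [hz, deg0 hn, Nat.cast_sub (by omega), Nat.cast_one]
  have dk : ∀ k : Fin n, k.val ≠ 0 → (((starGraph n).degree k : ℕ) : ℝ) = 1 := by
    intro k hk; rw [degk hn k hk, Nat.cast_one]
  set c : ℝ := 2 * ((n : ℝ) - 1) / n with hc
  set M := (starGraph n).lapMatrix ℝ - c • (1 : Matrix (Fin n) (Fin n) ℝ) with hMdef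
  have hM : M = ((2 - (n : ℝ)) / n) • (1 : Matrix (Fin n) (Fin n) ℝ)
      + (-(1 : ℝ) / n) • J + ((1 : ℝ) / n) • W := by
    rw [hMdef]
    ext i j
    simp only [Matrix.sub_apply, Matrix.add_apply, Matrix.smul_apply,
      SimpleGraph.lapMatrix, SimpleGraph.degMatrix, SimpleGraph.adjMatrix_apply,
      Matrix.diagonal_apply, hJ, hW, vecMulVec_apply, smul_eq_mul,
      Matrix.one_apply, hv]
    by_cases hij : i = j
    · subst hij
      rw [if_neg (fun h => ((star_adj i i).mp h).1 rfl)]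
      simp only [if_pos rfl, ↓reduceIte]
      by_cases h0 : i.val = 0
      · have : i = z := Fin.ext h0
        rw [this, d0, wz, hc]
        field_simp; ring
      · rw [dk i h0, wk i h0, hc]
        field_simp; ring
    · simp only [if_neg hij]
      by_cases h0i : i.val = 0
      · have h0j : j.val ≠ 0 := fun h => hij (Fin.ext (by rw [h0i, h]))
        rw [if_pos ((star_adj i j).mpr ⟨hij, Or.inl h0i⟩)]
        have : i = z := Fin.ext h0i
        rw [this, wz, wk j h0j, hc]
        field_simp
        ring
      · by_cases h0j : j.val = 0
        · rw [if_pos ((star_adj i j).mpr ⟨hij, Or.inr h0j⟩)]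
          have : j = z := Fin.ext h0j
          rw [this, wz, wk i h0i, hc]
          field_simp
          ring
        · rw [if_neg (fun h => by
            rcases ((star_adj i j).mp h).2 with h' | h'
            exacts [h0i h', h0j h'])]
          rw [wk i h0i, wk j h0j, hc]
          field_simp
          ring
  have hMt : Mᵀ = M := by
    rw [hM, Matrix.transpose_add, Matrix.transpose_add, Matrix.transpose_smul,
      Matrix.transpose_smul, Matrix.transpose_smul, Matrix.transpose_one,
      hJ, hW, vvt, vvt]
  set a : ℝ := ((n : ℝ) - 2) / n with ha
  set p : ℝ := (1 : ℝ) / n with hp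
  set q : ℝ := ((n : ℝ) ^ 2 - 3 * n + 4) / (n ^ 2 * ((n : ℝ) - 1)) with hq
  set S := a • (1 : Matrix (Fin n) (Fin n) ℝ) + p • J + q • W with hSdef
  have sq : ∀ x y r : ℝ,
      (x • (1 : Matrix (Fin n) (Fin n) ℝ) + y • J + r • W) *
        (x • (1 : Matrix (Fin n) (Fin n) ℝ) + y • J + r • W) =
      (x ^ 2) • (1 : Matrix (Fin n) (Fin n) ℝ) +
        (2 * x * y + n * y ^ 2) • J + (2 * x * r + (n * ((n : ℝ) - 1)) * r ^ 2) • W := by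
    intro x y r
    simp only [add_mul, mul_add, Matrix.smul_mul, Matrix.mul_smul, Matrix.one_mul,
      Matrix.mul_one, hJ, hW, vvm, dvv, dvw, dwv, dww, zero_smul, smul_zero,
      add_zero, zero_add]
    module
  have hsq : S ^ 2 = M * Mᵀ := by
    rw [pow_two, hMt, hSdef, hM, sq, sq]
    have e1 : a ^ 2 = ((2 - (n : ℝ)) / n) ^ 2 := by
      rw [ha]; field_simp; ring
    have e2 : 2 * a * p + (n : ℝ) * p ^ 2 =
        2 * ((2 - (n : ℝ)) / n) * (-(1 : ℝ) / n) + n * (-(1 : ℝ) / n) ^ 2 := by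
      rw [ha, hp]; field_simp; ring
    have e3 : 2 * a * q + ((n : ℝ) * ((n : ℝ) - 1)) * q ^ 2 =
        2 * ((2 - (n : ℝ)) / n) * ((1 : ℝ) / n) +
          (n * ((n : ℝ) - 1)) * ((1 : ℝ) / n) ^ 2 := by
      rw [ha, hq]; field_simp; ring
    rw [e1, e2, e3]
  have ha0 : 0 ≤ a := by rw [ha]; apply div_nonneg <;> linarith
  have hp0 : 0 ≤ p := by rw [hp]; apply div_nonneg <;> linarith
  have hq0 : 0 ≤ q := by
    rw [hq]; apply div_nonneg <;> nlinarith
  have hSsym : Sᵀ = S := by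
    rw [hSdef, Matrix.transpose_add, Matrix.transpose_add, Matrix.transpose_smul,
      Matrix.transpose_smul, Matrix.transpose_smul, Matrix.transpose_one,
      hJ, hW, vvt, vvt]
  have hS : S.PosSemidef := by
    rw [Matrix.posSemidef_iff_dotProduct_mulVec]
    constructor
    · rw [Matrix.IsHermitian, Matrix.conjTranspose_eq_transpose_of_trivial, hSsym]
    · intro x
      have hsx : star x = x := by
        funext i; simp
      have h1 : 0 ≤ x ⬝ᵥ x := by
        rw [dotProduct]
        exact Finset.sum_nonneg fun i _ => mul_self_nonneg _
      have expand : x ⬝ᵥ (S *ᵥ x) =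
          a * (x ⬝ᵥ x) + p * ((v ⬝ᵥ x) * (v ⬝ᵥ x)) + q * ((w ⬝ᵥ x) * (w ⬝ᵥ x)) := by
        rw [hSdef, Matrix.add_mulVec, Matrix.add_mulVec, Matrix.smul_mulVec,
          Matrix.smul_mulVec, Matrix.smul_mulVec, Matrix.one_mulVec,
          hJ, hW, vvmv, vvmv]
        simp only [dotProduct_add, dotProduct_smul, smul_eq_mul]
        rw [dotProduct_comm x v, dotProduct_comm x w]
      rw [hsx, expand]
      exact add_nonneg (add_nonneg (mul_nonneg ha0 h1)
        (mul_nonneg hp0 (mul_self_nonneg _))) (mul_nonneg hq0 (mul_self_nonneg _))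
  have hMMt : (M * Mᵀ).PosSemidef := hsq ▸ (hS.pow 2)
  have key : matAbs M = S := by
    have h := (posSemidefSqrt_eq hMMt hS hsq).symm
    rw [matAbs]
    exact h.symm
  have hcard : (2 * (((starGraph n).edgeFinset.card : ℕ) : ℝ)) / n = c := by
    rw [star_edges hn, Nat.cast_sub (by omega), Nat.cast_one, hc]
  have hLE : ∀ i : Fin n, vertexLapEnergy (starGraph n) i = S i i := by
    intro i
    rw [vertexLapEnergy, hcard, ← hMdef, key]
  have hSdiag : ∀ i : Fin n, S i i = a + p + q * (w i * w i) := by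
    intro i
    rw [hSdef]
    simp only [Matrix.add_apply, Matrix.smul_apply, Matrix.one_apply_eq,
      hJ, hW, vecMulVec_apply, smul_eq_mul, hv]
    ring
  constructor
  · rw [hLE, hSdiag, wz, ha, hp, hq]
    field_simp
    ring
  · intro k hk
    rw [hLE, hSdiag, wk k hk, ha, hp, hq]
    field_simp
    ring
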